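/- Let F : ℕ → ℕ be strictly increasing with F(n+1) − F(n) → ∞ and Σ_{m=n+1}^{∞} 2^{F(n)−F(m)} → 0 as n → ∞. Define λᵢ = 2^{−F(i)}. Let Q : ℕ → ℚ≥0 be a bijection, and for a subset B of ℚ≥0 define ⟨λ, B⟩ = Σ_{i : Q(i) ∈ B} λᵢ (and ⟨λ, ∅⟩ = 0). Let k ∈ ℕ, let P₀, …, P_k be subsets of ℚ≥0, and let S ⊆ ℚ≥0. Assume there exist real numbers a, b₀, …, b_k ∈ [0,∞) such that: (I) a < bᵢ for all i ∈ {0,…,k}; (II) bᵢ ≠ b_j whenever i ≠ j; and (III) S ∩ Pᵢ = [a, bᵢ) ∩ ℚ≥0 for all i ∈ {0,…,k}. Then the (k+2) real numbers ⟨λ, P₀⟩, …, ⟨λ, P_k⟩, and 1 are linearly independent over ℚ. -/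

import Mathlib

open Filter

lemma aux_base (F : ℕ → ℕ) (hmono : StrictMono F) :
    Summable (fun m : ℕ => (2:ℝ) ^ (-(F m : ℤ))) := by
  apply Summable.of_nonneg_of_le (fun m => by positivity) (fun m => ?_) summable_geometric_two
  have h1 : m ≤ F m := hmono.le_apply
  have h2 : ((1:ℝ)/2) ^ m = (2:ℝ) ^ (-(m:ℤ)) := by
    rw [one_div, inv_pow, ← zpow_natCast, ← zpow_neg]
  rw [h2]
  exact zpow_le_zpow_right₀ one_le_two (by omega)

lemma aux_shift (f : ℕ → ℝ) (n : ℕ) :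
    (∑' m : {m : ℕ // n < m}, f m) = ∑' k : ℕ, f (n + 1 + k) := by
  rw [← Equiv.tsum_eq
    (⟨fun k => ⟨n + 1 + k, by omega⟩, fun m => m.1 - (n + 1),
      fun k => by simp, fun m => Subtype.ext (by have := m.2; simp; omega)⟩ :
      ℕ ≃ {m : ℕ // n < m}) (fun m : {m : ℕ // n < m} => f m)]
  rfl

lemma aux_step (f : ℕ → ℝ) (hf : Summable f) (n : ℕ) :
    (∑' m : {m : ℕ // n < m}, f m) = f (n + 1) + ∑' m : {m : ℕ // n + 1 < m}, f m := by
  rw [aux_shift, aux_shift]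
  have hs : Summable (fun k => f (n + 1 + k)) :=
    ((summable_nat_add_iff (n+1)).2 hf).congr (fun k => by ring_nf)
  rw [hs.tsum_eq_zero_add]
  congr 1
  exact tsum_congr fun k => by congr 1; omega

lemma aux_vanish (F : ℕ → ℕ) (hmono : StrictMono F)
    (hsum : Filter.Tendsto
      (fun n => ∑' m : {m : ℕ // n < m}, (2 : ℝ) ^ ((F n : ℤ) - (F (m : ℕ) : ℤ)))
      Filter.atTop (nhds 0))
    (d : ℕ → ℝ) (q : ℕ) (hq : 0 < q)
    (hint : ∀ m, ∃ z : ℤ, (q:ℝ) * d m = z)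
    (D : ℝ) (hD : ∀ m, |d m| ≤ D)
    (x : ℝ) (hx : ∃ z : ℤ, (q:ℝ) * x = z)
    (hfx : ∑' m : ℕ, d m * (2:ℝ)^(-(F m:ℤ)) = x) :
    ∃ N, ∀ m, N ≤ m → d m = 0 := by
  set f : ℕ → ℝ := fun m => d m * (2:ℝ)^(-(F m:ℤ)) with hf
  have hbase := aux_base F hmono
  have hD0 : 0 ≤ D := le_trans (abs_nonneg _) (hD 0)
  have habs : ∀ m, |f m| ≤ D * (2:ℝ)^(-(F m:ℤ)) := by
    intro m
    rw [hf, abs_mul, abs_of_pos (by positivity : (0:ℝ) < (2:ℝ)^(-(F m:ℤ)))]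
    exact mul_le_mul_of_nonneg_right (hD m) (by positivity)
  have hsumfabs : Summable (fun m => |f m|) :=
    Summable.of_nonneg_of_le (fun m => abs_nonneg _) habs (hbase.mul_left D)
  have hsumf : Summable f := hsumfabs.of_abs
  set t : ℕ → ℝ := fun n => ∑' m : {m : ℕ // n < m}, f m with ht
  have hsplit : ∀ n, ∑ m ∈ Finset.range (n+1), f m + t n = x := by
    intro n
    have e1 := hsumf.sum_add_tsum_compl (s := Finset.range (n+1))
    have hset : (↑(Finset.range (n+1)) : Set ℕ)ᶜ = {m : ℕ | n < m} := by
      ext m; simp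
    rw [hset] at e1
    rw [← hfx, ← e1]
    rfl
  -- the integer z n
  have hz : ∀ n, ∃ z : ℤ, (z:ℝ) = (q:ℝ) * (2:ℝ)^((F n : ℤ)) * t n := by
    intro n
    obtain ⟨zx, hzx⟩ := hx
    choose zd hzd using hint
    refine ⟨zx * 2^(F n) - ∑ m ∈ Finset.range (n+1), zd m * 2^(F n - F m), ?_⟩
    have ht' : t n = x - ∑ m ∈ Finset.range (n+1), f m := by
      have := hsplit n; linarith
    rw [ht', mul_sub, Finset.mul_sum]
    have hterm : ∀ m ∈ Finset.range (n+1),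
        (q:ℝ) * (2:ℝ)^((F n : ℤ)) * f m = ((zd m * 2^(F n - F m) : ℤ) : ℝ) := by
      intro m hm
      have hmn : F m ≤ F n := hmono.monotone (by simpa [Nat.lt_succ_iff] using hm)
      have hpow : (2:ℝ)^((F n : ℤ)) * (2:ℝ)^(-(F m:ℤ)) = (2:ℝ)^(F n - F m) := by
        rw [← zpow_add₀ (two_ne_zero), ← zpow_natCast]
        congr 1
        omega
      rw [hf]
      push_cast
      rw [← hzd m, ← hpow]
      ring
    rw [Finset.sum_congr rfl hterm]
    push_cast
    rw [← hzx, zpow_natCast]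
    ring
  set u : ℕ → ℝ := fun n => ∑' m : {m : ℕ // n < m}, (2:ℝ)^((F n:ℤ) - (F (m:ℕ):ℤ)) with hu
  have huq : ∀ n, u n = (2:ℝ)^((F n:ℤ)) * ∑' m : {m:ℕ//n < m}, (2:ℝ)^(-(F (m:ℕ):ℤ)) := by
    intro n
    rw [hu, ← tsum_mul_left]
    exact tsum_congr fun m => by rw [← zpow_add₀ (two_ne_zero), sub_eq_add_neg]
  have hbound : ∀ n, |(q:ℝ) * (2:ℝ)^((F n:ℤ)) * t n| ≤ ((q:ℝ)*D) * u n := by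
    intro n
    have h1 : |t n| ≤ D * ∑' m : {m:ℕ//n < m}, (2:ℝ)^(-(F (m:ℕ):ℤ)) := by
      calc |t n| ≤ ∑' m : {m:ℕ//n < m}, |f (m:ℕ)| := by
            simpa using norm_tsum_le_tsum_norm (f := fun m : {m:ℕ//n < m} => f (m:ℕ))
              (by simpa [Function.comp_def] using (hsumfabs.subtype _))
        _ ≤ ∑' m : {m:ℕ//n < m}, D * (2:ℝ)^(-(F (m:ℕ):ℤ)) :=
            Summable.tsum_le_tsum (fun m => habs (m:ℕ)) (hsumfabs.subtype _)
              (((hbase.mul_left D)).subtype _)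
        _ = D * ∑' m : {m:ℕ//n < m}, (2:ℝ)^(-(F (m:ℕ):ℤ)) := tsum_mul_left
    rw [abs_mul, abs_mul, abs_of_nonneg (by positivity : (0:ℝ) ≤ (q:ℝ)),
      abs_of_pos (by positivity : (0:ℝ) < (2:ℝ)^((F n:ℤ)))]
    calc (q:ℝ) * 2^((F n:ℤ)) * |t n|
        ≤ (q:ℝ) * 2^((F n:ℤ)) * (D * ∑' m : {m:ℕ//n < m}, (2:ℝ)^(-(F (m:ℕ):ℤ))) := by
          exact mul_le_mul_of_nonneg_left h1 (by positivity)
      _ = ((q:ℝ)*D) * u n := by rw [huq n]; ring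
  have hto : Filter.Tendsto (fun n => ((q:ℝ)*D) * u n) Filter.atTop (nhds 0) := by
    have := hsum.const_mul ((q:ℝ)*D)
    simpa using this
  have hev : ∀ᶠ n in Filter.atTop, ((q:ℝ)*D) * u n < 1 :=
    hto.eventually_lt_const one_pos
  obtain ⟨N, hN⟩ := Filter.eventually_atTop.1 hev
  have htzero : ∀ n, N ≤ n → t n = 0 := by
    intro n hn
    obtain ⟨z, hz'⟩ := hz n
    have h1 : |(z:ℝ)| < 1 := by
      rw [hz']
      exact lt_of_le_of_lt (hbound n) (hN n hn)
    have h2 : z = 0 := by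
      have h4 : |z| < 1 := by exact_mod_cast h1
      have h5 := abs_lt.1 h4
      omega
    rw [h2] at hz'
    have hq2 : (q:ℝ) * (2:ℝ)^((F n:ℤ)) ≠ 0 := by positivity
    have := hz'.symm
    rw [mul_assoc] at this
    simpa [mul_eq_zero, hq2, (by positivity : (q:ℝ) ≠ 0),
      (by positivity : (2:ℝ)^((F n:ℤ)) ≠ 0)] using this
  refine ⟨N + 1, fun m hm => ?_⟩
  obtain ⟨n, rfl⟩ : ∃ n, m = n + 1 := ⟨m - 1, by omega⟩
  have hn : N ≤ n := by omega
  have hstep := aux_step f hsumf n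
  rw [show (∑' m : {m : ℕ // n < m}, f (m:ℕ)) = t n from rfl,
    show (∑' m : {m : ℕ // n + 1 < m}, f (m:ℕ)) = t (n+1) from rfl,
    htzero n hn, htzero (n+1) (by omega)] at hstep
  have hf0 : f (n+1) = 0 := by linarith
  rw [hf] at hf0
  have : (2:ℝ)^(-(F (n+1):ℤ)) ≠ 0 := by positivity
  exact (mul_eq_zero.1 hf0).resolve_right this

lemma aux_btwn (Q : ℕ ≃ NNRat) {x y : ℝ} (hx : 0 ≤ x) (hxy : x < y) (N : ℕ) :
    ∃ q : NNRat, x < (q:ℝ) ∧ (q:ℝ) < y ∧ N < Q.symm q := by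
  have cast_eq : ∀ r : ℚ, 0 ≤ r → ((r.toNNRat : NNRat) : ℝ) = (r : ℝ) := fun r h => by
    rw [← Rat.cast_nnratCast, Rat.coe_toNNRat r h]
  set A : Set NNRat := {q : NNRat | x < (q:ℝ) ∧ (q:ℝ) < y} with hA
  have hne : ∀ z : ℝ, x < z → z ≤ y → ∃ q ∈ A, (q:ℝ) < z := by
    intro z h1 h2
    obtain ⟨r, hr1, hr2⟩ := exists_rat_btwn h1
    have hr0' : (0:ℝ) ≤ r := le_of_lt (lt_of_le_of_lt hx hr1)
    have hr0 : (0:ℚ) ≤ r := by exact_mod_cast hr0'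
    exact ⟨r.toNNRat, ⟨by rw [cast_eq r hr0]; exact hr1,
      by rw [cast_eq r hr0]; exact lt_of_lt_of_le hr2 h2⟩, by rw [cast_eq r hr0]; exact hr2⟩
  have hinf : A.Infinite := by
    intro hfin
    obtain ⟨q0, hq0, -⟩ := hne y hxy le_rfl
    have hnefin : hfin.toFinset.Nonempty := ⟨q0, hfin.mem_toFinset.2 hq0⟩
    set m := hfin.toFinset.min' hnefin with hm
    have hmA : m ∈ A := hfin.mem_toFinset.1 (hfin.toFinset.min'_mem hnefin)
    obtain ⟨q1, hq1A, hq1lt⟩ := hne (m:ℝ) hmA.1 (le_of_lt hmA.2)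
    have : m ≤ q1 := hfin.toFinset.min'_le q1 (hfin.mem_toFinset.2 hq1A)
    have : (m:ℝ) ≤ (q1:ℝ) := by exact_mod_cast this
    linarith
  have hB : (Set.Finite (Q '' (Set.Iic N))) := (Set.finite_Iic N).image _
  obtain ⟨q, hqA, hqB⟩ := (hinf.diff hB).nonempty
  refine ⟨q, hqA.1, hqA.2, ?_⟩
  by_contra hle
  exact hqB ⟨Q.symm q, Set.mem_Iic.2 (le_of_not_gt hle), Q.apply_symm_apply q⟩

lemma aux_ratint (c : ℚ) (n : ℕ) (h : c.den ∣ n) : ∃ z : ℤ, (n:ℚ) * c = z := by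
  obtain ⟨m, rfl⟩ := h
  refine ⟨m * c.num, ?_⟩
  push_cast
  rw [mul_comm (c.den:ℚ) (m:ℚ), mul_assoc, mul_comm (c.den:ℚ) c, Rat.mul_den_eq_num]

/-- Linear independence over `ℚ` of the numbers `⟨λ, P₀⟩, …, ⟨λ, P_k⟩, 1`,
where `λ i = 2^{-F i}` and `⟨λ, B⟩ = Σ_{i : Q i ∈ B} λ i`. -/
theorem stmt3 (F : ℕ → ℕ) (hmono : StrictMono F)
    (hgap : Filter.Tendsto (fun n => F (n + 1) - F n) Filter.atTop Filter.atTop)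
    (hsum : Filter.Tendsto
      (fun n => ∑' m : {m : ℕ // n < m}, (2 : ℝ) ^ ((F n : ℤ) - (F (m : ℕ) : ℤ)))
      Filter.atTop (nhds 0))
    (Q : ℕ ≃ NNRat) (k : ℕ) (P : Fin (k + 1) → Set NNRat) (S : Set NNRat)
    (a : ℝ) (b : Fin (k + 1) → ℝ) (ha : 0 ≤ a) (hb : ∀ i, 0 ≤ b i)
    (hab : ∀ i, a < b i)
    (hbinj : ∀ i j, i ≠ j → b i ≠ b j)
    (hSP : ∀ i, S ∩ P i = {q : NNRat | a ≤ (q : ℝ) ∧ (q : ℝ) < b i}) :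
    ∀ (c : Fin (k + 1) → ℚ) (c' : ℚ),
      (∑ i, (c i : ℝ) * ∑' m : {m : ℕ // Q m ∈ P i}, (2 : ℝ) ^ (-(F (m : ℕ) : ℤ)))
        + (c' : ℝ) * 1 = 0 →
      (∀ i, c i = 0) ∧ c' = 0 := by
  classical
  intro c c' heq
  have hbase := aux_base F hmono
  set d : ℕ → ℝ := fun m => ∑ i, (c i : ℝ) * (if Q m ∈ P i then (1:ℝ) else 0) with hd
  -- Step A : ∑' d m 2^{-F m} = -c'
  have hA : ∑' m : ℕ, d m * (2:ℝ)^(-(F m:ℤ)) = -(c':ℝ) := by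
    have h1 : ∀ i : Fin (k+1), (c i:ℝ) * ∑' m : {m : ℕ // Q m ∈ P i}, (2:ℝ)^(-(F (m:ℕ):ℤ))
        = ∑' m : ℕ, (c i:ℝ) * Set.indicator {m : ℕ | Q m ∈ P i}
            (fun m => (2:ℝ)^(-(F m:ℤ))) m := by
      intro i
      rw [tsum_mul_left]
      congr 1
      exact tsum_subtype {m : ℕ | Q m ∈ P i} (fun m => (2:ℝ)^(-(F m:ℤ)))
    have hgsum : ∀ i : Fin (k+1), Summable (fun m : ℕ => (c i:ℝ) *
        Set.indicator {m : ℕ | Q m ∈ P i} (fun m => (2:ℝ)^(-(F m:ℤ))) m) :=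
      fun i => (hbase.indicator _).mul_left _
    have h2 : ∑ i, (c i:ℝ) * ∑' m : {m : ℕ // Q m ∈ P i}, (2:ℝ)^(-(F (m:ℕ):ℤ))
        = ∑' m : ℕ, ∑ i, (c i:ℝ) * Set.indicator {m : ℕ | Q m ∈ P i}
            (fun m => (2:ℝ)^(-(F m:ℤ))) m := by
      rw [Finset.sum_congr rfl (fun i _ => h1 i)]
      exact (Summable.tsum_finsetSum (fun i _ => hgsum i)).symm
    have h3 : ∀ m : ℕ, (∑ i, (c i:ℝ) * Set.indicator {m : ℕ | Q m ∈ P i}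
        (fun m => (2:ℝ)^(-(F m:ℤ))) m) = d m * (2:ℝ)^(-(F m:ℤ)) := by
      intro m
      rw [hd, Finset.sum_mul]
      refine Finset.sum_congr rfl fun i _ => ?_
      by_cases h : Q m ∈ P i <;>
        simp [Set.indicator, h, mul_assoc]
    rw [h2, tsum_congr h3] at heq
    linarith
  -- Step B : integrality data
  set q : ℕ := (∏ i, (c i).den) * c'.den with hqdef
  have hq : 0 < q := by
    apply Nat.mul_pos
    · exact Finset.prod_pos fun i _ => (c i).pos
    · exact c'.pos
  have hqc : ∀ i, ∃ z : ℤ, ((q:ℚ)) * c i = z := by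
    intro i
    exact aux_ratint (c i) q (Dvd.dvd.mul_right (Finset.dvd_prod_of_mem _ (Finset.mem_univ i)) _)
  have hint : ∀ m, ∃ z : ℤ, (q:ℝ) * d m = z := by
    intro m
    choose zc hzc using hqc
    refine ⟨∑ i, zc i * (if Q m ∈ P i then (1:ℤ) else 0), ?_⟩
    rw [hd, Finset.mul_sum]
    push_cast
    refine Finset.sum_congr rfl fun i _ => ?_
    have : ((zc i : ℚ) : ℝ) = ((q:ℚ) * c i : ℚ) := by rw [hzc i]
    push_cast at this
    rw [← mul_assoc, ← this]
  have hx : ∃ z : ℤ, (q:ℝ) * (-(c':ℝ)) = z := by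
    obtain ⟨z, hz⟩ := aux_ratint c' q (Dvd.dvd.mul_left dvd_rfl _)
    refine ⟨-z, ?_⟩
    have : ((z:ℚ):ℝ) = ((q:ℚ) * c' : ℚ) := by rw [hz]
    push_cast at this ⊢
    linarith
  set D : ℝ := ∑ i, |(c i:ℝ)| with hDdef
  have hD : ∀ m, |d m| ≤ D := by
    intro m
    rw [hd]
    refine le_trans (Finset.abs_sum_le_sum_abs _ _) (Finset.sum_le_sum fun i _ => ?_)
    rw [abs_mul]
    by_cases h : Q m ∈ P i <;> simp [h]
  obtain ⟨N, hN⟩ := aux_vanish F hmono hsum d q hq hint D hD (-(c':ℝ)) hx hA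
  -- Step D : membership characterization
  have hPmem : ∀ (i j : Fin (k+1)) (qq : NNRat), a ≤ (qq:ℝ) → (qq:ℝ) < b i →
      ((qq:ℝ) < b j ↔ qq ∈ P j) := by
    intro i j qq h1 h2
    have hS : qq ∈ S := by
      have : qq ∈ S ∩ P i := by rw [hSP i]; exact ⟨h1, h2⟩
      exact this.1
    constructor
    · intro h3
      have : qq ∈ S ∩ P j := by rw [hSP j]; exact ⟨h1, h3⟩
      exact this.2
    · intro h3
      have : qq ∈ S ∩ P j := ⟨hS, h3⟩
      rw [hSP j] at this
      exact this.2
  -- Step E : partial sums vanish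
  have hkey : ∀ i, ∑ j ∈ Finset.univ.filter (fun j => b i ≤ b j), (c j:ℝ) = 0 := by
    intro i
    set L : ℝ := Finset.univ.sup' ⟨i, Finset.mem_univ i⟩
      (fun j => if b j < b i then b j else a) with hLdef
    have hL1 : a ≤ L := by
      refine le_trans (le_of_eq ?_) (Finset.le_sup' _ (Finset.mem_univ i))
      simp
    have hL2 : L < b i := by
      rw [hLdef]
      apply (Finset.sup'_lt_iff _).2
      intro j _
      by_cases h : b j < b i <;> simp [h, hab i]
    have hL3 : ∀ j, b j < b i → b j ≤ L := by
      intro j h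
      refine le_trans (le_of_eq ?_) (Finset.le_sup' _ (Finset.mem_univ j))
      simp [h]
    obtain ⟨q0, hq1, hq2, hq3⟩ := aux_btwn Q (le_trans ha hL1) hL2 N
    have hqa : a ≤ (q0:ℝ) := le_trans hL1 (le_of_lt hq1)
    have hd0 : d (Q.symm q0) = 0 := hN _ (le_of_lt hq3)
    rw [hd] at hd0
    have hmem : ∀ j, (Q (Q.symm q0) ∈ P j) ↔ b i ≤ b j := by
      intro j
      rw [Q.apply_symm_apply, ← hPmem i j q0 hqa hq2]
      constructor
      · intro h
        by_contra hc
        have := hL3 j (lt_of_not_ge hc)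
        linarith
      · intro h
        linarith
    rw [Finset.sum_filter]
    have hterm : ∀ j ∈ Finset.univ, (if b i ≤ b j then (c j:ℝ) else 0)
        = (c j:ℝ) * (if Q (Q.symm q0) ∈ P j then (1:ℝ) else 0) := by
      intro j _
      by_cases h : b i ≤ b j
      · have hm' : Q (Q.symm q0) ∈ P j := (hmem j).2 h
        rw [Q.apply_symm_apply] at hm'
        simp [h, hm']
      · have hm' : Q (Q.symm q0) ∉ P j := fun hh => h ((hmem j).1 hh)
        rw [Q.apply_symm_apply] at hm'
        simp [h, hm']
    rw [Finset.sum_congr rfl hterm]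
    exact hd0
  -- Step F : each c i = 0
  have hc0 : ∀ i, c i = 0 := by
    intro i
    have hfilter : Finset.univ.filter (fun j => b i ≤ b j)
        = insert i (Finset.univ.filter (fun j => b i < b j)) := by
      ext j
      simp only [Finset.mem_filter, Finset.mem_univ, true_and, Finset.mem_insert]
      constructor
      · intro h
        rcases eq_or_lt_of_le h with h' | h'
        · left
          by_contra hne
          exact hbinj j i hne h'.symm
        · right; exact h'
      · rintro (rfl | h)
        · exact le_rfl
        · exact le_of_lt h
    have hnotmem : i ∉ Finset.univ.filter (fun j => b i < b j) := by simp
    have hsum_i := hkey i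
    rw [hfilter, Finset.sum_insert hnotmem] at hsum_i
    have hrest : ∑ j ∈ Finset.univ.filter (fun j => b i < b j), (c j:ℝ) = 0 := by
      rcases Finset.eq_empty_or_nonempty (Finset.univ.filter (fun j => b i < b j)) with he | hne
      · rw [he]; simp
      · obtain ⟨i', hi'mem, hi'min⟩ := Finset.exists_min_image _ b hne
        have hi'lt : b i < b i' := (Finset.mem_filter.1 hi'mem).2
        have : Finset.univ.filter (fun j => b i' ≤ b j)
            = Finset.univ.filter (fun j => b i < b j) := by
          ext j
          simp only [Finset.mem_filter, Finset.mem_univ, true_and]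
          constructor
          · intro h; linarith
          · intro h; exact hi'min j (by simp [h])
        rw [← this]
        exact hkey i'
    have : (c i : ℝ) = 0 := by linarith
    exact_mod_cast this
  refine ⟨hc0, ?_⟩
  have : ∑ i, (c i:ℝ) * ∑' m : {m : ℕ // Q m ∈ P i}, (2:ℝ)^(-(F (m:ℕ):ℤ)) = 0 := by
    refine Finset.sum_eq_zero fun i _ => ?_
    rw [hc0 i]
    simp
  rw [this] at heq
  have : (c' : ℝ) = 0 := by linarith
  exact_mod_cast this
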